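/- Let a > 0, V ∈ ℝ, T > 0, and define E(A) = (1/2)((VT - A)/T - V)^2 · T + (A^2 - a^2)^2 evaluated for trajectories ending at b = VT. Then E(A) = A^2/(2T) + (A^2 - a^2)^2, which is identical to the zero-drift cost to end at 0; in particular, for T > 1/(4a^2), E has exactly two global minimizers ±√(a^2 - 1/(4T)). -/
import Mathlib


/-- For Brownian motion with constant drift `V`, conditioning at `b = VT`: the cost
`E(A) = (1/2)((VT - A)/T - V)² T + (A²-a²)²` equals `A²/(2T) + (A²-a²)²`, the zero-drift
cost to end at 0; for `T > 1/(4a²)` its global minimizers are exactly `±√(a² - 1/(4T))`. -/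
theorem stmt8 (a V T : ℝ) (ha : 0 < a) (hT : 0 < T)
    (E : ℝ → ℝ)
    (hE : ∀ A, E A = (1 / 2) * ((V * T - A) / T - V) ^ 2 * T + (A ^ 2 - a ^ 2) ^ 2) :
    (∀ A : ℝ, E A = A ^ 2 / (2 * T) + (A ^ 2 - a ^ 2) ^ 2) ∧
    (1 / (4 * a ^ 2) < T →
      {A : ℝ | ∀ B : ℝ, E A ≤ E B} =
        {Real.sqrt (a ^ 2 - 1 / (4 * T)), -Real.sqrt (a ^ 2 - 1 / (4 * T))}) := by
  have h1 : ∀ A : ℝ, E A = A ^ 2 / (2 * T) + (A ^ 2 - a ^ 2) ^ 2 := by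
    intro A
    rw [hE A]
    field_simp
    ring
  refine ⟨h1, fun hT4 => ?_⟩
  set c : ℝ := a ^ 2 - 1 / (4 * T) with hc
  have hcpos : 0 < c := by
    have : 1 / (4 * T) < a ^ 2 := by
      rw [div_lt_iff₀ (by positivity)]
      rw [div_lt_iff₀ (by positivity)] at hT4
      nlinarith
    simpa [hc] using sub_pos.mpr this
  have hrs : Real.sqrt c ^ 2 = c := Real.sq_sqrt hcpos.le
  have key : ∀ A : ℝ, E A = (A ^ 2 - c) ^ 2 + (a ^ 4 - c ^ 2) := by
    intro A
    rw [h1 A, hc]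
    field_simp
    ring
  ext A
  simp only [Set.mem_setOf_eq, Set.mem_insert_iff, Set.mem_singleton_iff]
  constructor
  · intro h
    have := h (Real.sqrt c)
    rw [key A, key (Real.sqrt c), hrs] at this
    have hA2 : A ^ 2 = c := by nlinarith [sq_nonneg (A ^ 2 - c)]
    have : A ^ 2 = Real.sqrt c ^ 2 := by rw [hrs, hA2]
    rcases sq_eq_sq_iff_eq_or_eq_neg.mp this with h' | h'
    · exact Or.inl h'
    · exact Or.inr h'
  · intro h B
    rw [key A, key B]
    have hA2 : A ^ 2 = c := by rcases h with h | h <;> rw [h] <;> simp [hrs]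
    rw [hA2]
    nlinarith [sq_nonneg (B ^ 2 - c)]
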